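/- Let α > 0 and let h : ℝ → ℝ satisfy: (i) h(x+1) = h(x) for all x ∈ ℝ; (ii) h(x) = −h(1−x) for all x ∈ [0,1]; (iii) h(z) = z^α · h(2 − 1/z) for all z ∈ [1/2, 1]. Then for every nonzero x ∈ ℝ: h(x) = |x|^α · h((2x−1)/x) and h(x) = −|x|^α · h((1−x)/x); moreover h(0) = 0. -/
import Mathlib


/-- If `h : ℝ → ℝ` is 1-periodic, anti-symmetric around `1/2` on `[0,1]`, and
satisfies `h(z) = z^α h(2 - 1/z)` on `[1/2,1]`, then for every nonzero `x`,
`h(x) = |x|^α h((2x-1)/x)` and `h(x) = -|x|^α h((1-x)/x)`; moreover `h(0) = 0`. -/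
theorem stmt8 (α : ℝ) (hα : 0 < α) (h : ℝ → ℝ)
    (hper : ∀ x : ℝ, h (x + 1) = h x)
    (hanti : ∀ x : ℝ, 0 ≤ x → x ≤ 1 → h x = -h (1 - x))
    (hfe : ∀ z : ℝ, 1 / 2 ≤ z → z ≤ 1 → h z = z ^ α * h (2 - 1 / z)) :
    (∀ x : ℝ, x ≠ 0 →
      h x = |x| ^ α * h ((2 * x - 1) / x) ∧ h x = -(|x| ^ α) * h ((1 - x) / x)) ∧
    h 0 = 0 := by
  have per : Function.Periodic h 1 := hper
  have hint : ∀ (n : ℤ) (x : ℝ), h (x + n) = h x := by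
    intro n x
    have := (per.int_mul n) x
    simpa using this
  have h0 : h 0 = 0 := by
    have h1 : h 1 = h 0 := by simpa using hper 0
    have := hanti 0 le_rfl zero_le_one
    simp only [sub_zero] at this
    rw [h1] at this
    linarith
  -- oddness
  have hodd : ∀ x : ℝ, h (-x) = -h x := by
    intro x
    have hx' : Int.fract x + (⌊x⌋ : ℝ) = x := Int.fract_add_floor x
    set t := Int.fract x with ht
    have ht0 : 0 ≤ t := Int.fract_nonneg x
    have ht1 : t < 1 := Int.fract_lt_one x
    have hxt : h x = h t := by
      have := hint ⌊x⌋ t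
      rw [hx'] at this
      exact this
    have hmx : h (-x) = h (1 - t) := by
      have e := hint (-⌊x⌋ - 1) (1 - t)
      have e2 : (1 - t) + ((-⌊x⌋ - 1 : ℤ) : ℝ) = -x := by push_cast; linarith
      rw [e2] at e
      exact e
    rcases eq_or_lt_of_le ht0 with h0t | h0t
    · have h1 : h 1 = h 0 := by simpa using hper 0
      rw [hmx, hxt, ← h0t]
      simp [h1, h0]
    · have := hanti t ht0 ht1.le
      rw [hmx, hxt]
      linarith
  -- key induction: for 0 < x ≤ 1 with 1/x ≤ n, h x = -(x^α) h (1/x)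
  have key : ∀ n : ℕ, ∀ x : ℝ, 0 < x → x ≤ 1 → 1 / x ≤ (n : ℝ) →
      h x = -(x ^ α) * h (1 / x) := by
    intro n
    induction n with
    | zero =>
      intro x hx hx1 hn
      exfalso
      have : 0 < 1 / x := by positivity
      simp at hn
      linarith
    | succ n ih =>
      intro x hx hx1 hn
      by_cases hhalf : 1 / 2 ≤ x
      · -- base case
        have hb1 : 0 ≤ 2 - 1 / x := by
          have : 1 / x ≤ 2 := by rw [div_le_iff₀ hx]; linarith
          linarith
        have hb2 : 2 - 1 / x ≤ 1 := by
          have : 1 ≤ 1 / x := by rw [le_div_iff₀ hx]; linarith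
          linarith
        have e1 := hfe x hhalf hx1
        have e2 := hanti (2 - 1 / x) hb1 hb2
        have e3 : h (1 - (2 - 1 / x)) = h (1 / x) := by
          have := hper (1 / x - 1)
          have e4 : 1 - (2 - 1 / x) = 1 / x - 1 := by ring
          have e5 : 1 / x - 1 + 1 = 1 / x := by ring
          rw [e5] at this
          rw [e4, this]
        rw [e3] at e2
        rw [e1, e2]
        ring
      · push_neg at hhalf
        have hx2 : 0 < 1 - x := by linarith
        set y := x / (1 - x) with hy
        have hy0 : 0 < y := div_pos hx hx2
        have hy1 : y ≤ 1 := by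
          rw [div_le_one hx2]; linarith
        have hyinv : 1 / y = 1 / x - 1 := by
          rw [hy]
          field_simp
        have hyn : 1 / y ≤ (n : ℝ) := by
          rw [hyinv]
          push_cast at hn
          linarith
        have ihy := ih y hy0 hy1 hyn
        have h1y : h (1 / y) = h (1 / x) := by
          rw [hyinv]
          have := hper (1 / x - 1)
          have e5 : 1 / x - 1 + 1 = 1 / x := by ring
          rw [e5] at this
          exact this.symm
        have e1 := hanti x hx.le hx1
        have e2 := hfe (1 - x) (by linarith) (by linarith)
        have e3 : 2 - 1 / (1 - x) = 1 - y := by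
          rw [hy]; field_simp; ring
        have e4 := hanti y hy0.le hy1
        have e5 : (1 - x) ^ α * y ^ α = x ^ α := by
          rw [← Real.mul_rpow hx2.le hy0.le, hy]
          field_simp
        rw [e3] at e2
        rw [h1y] at ihy
        -- h x = -h(1-x) = -(1-x)^α h(1-y) = (1-x)^α h y = (1-x)^α * (-(y^α) h(1/x)) = -(x^α) h(1/x)
        rw [e1, e2]
        have e6 : h (1 - y) = -h y := by linarith
        rw [e6, ihy]
        linear_combination (-(h (1 / x))) * e5
  -- the inversion relation for all positive x
  have inv_rel : ∀ x : ℝ, 0 < x → h x = -(x ^ α) * h (1 / x) := by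
    intro x hx
    rcases le_or_gt x 1 with hle | hgt
    · exact key ⌈1 / x⌉₊ x hx hle (Nat.le_ceil _)
    · have hx' : 0 < 1 / x := by positivity
      have hle1 : 1 / x ≤ 1 := by
        rw [div_le_one hx]; linarith
      have e := key ⌈x⌉₊ (1 / x) hx' hle1 (by rw [one_div_one_div]; exact Nat.le_ceil x)
      rw [one_div_one_div] at e
      have hpow : x ^ α * (1 / x) ^ α = 1 := by
        rw [← Real.mul_rpow hx.le hx'.le]
        rw [mul_one_div_cancel hx.ne']
        simp
      calc h x = (x ^ α * (1 / x) ^ α) * h x := by rw [hpow, one_mul]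
        _ = -(x ^ α) * (-((1 / x) ^ α) * h x) := by ring
        _ = -(x ^ α) * h (1 / x) := by rw [← e]
  constructor
  · intro x hx
    rcases hx.lt_or_gt with hneg | hpos
    · -- x < 0
      set p := -x with hp
      have hp0 : 0 < p := by rw [hp]; linarith
      have habs : |x| = p := abs_of_neg hneg
      have hr := inv_rel p hp0
      have hxp : h x = p ^ α * h (1 / p) := by
        have : h x = -h p := by
          have := hodd p
          rw [hp] at this
          simp at this
          rw [this, hodd]
        rw [this, hr]; ring
      constructor
      · have arg1 : (2 * x - 1) / x = 1 / p + 2 := by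
          rw [hp]; field_simp; ring
        have harg1 : h ((2 * x - 1) / x) = h (1 / p) := by
          rw [arg1]
          have := hint 2 (1 / p)
          push_cast at this
          exact this
        rw [habs, harg1, hxp]
      · have arg2 : (1 - x) / x = -(1 / p) + -1 := by
          rw [hp]; field_simp; ring
        have harg2 : h ((1 - x) / x) = -h (1 / p) := by
          rw [arg2]
          have := hint (-1) (-(1 / p))
          push_cast at this
          rw [this, hodd]
        rw [habs, harg2, hxp]; ring
    · -- x > 0
      have habs : |x| = x := abs_of_pos hpos
      have hr := inv_rel x hpos
      constructor
      · have arg1 : (2 * x - 1) / x = -(1 / x) + 2 := by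
          field_simp; ring
        have harg1 : h ((2 * x - 1) / x) = -h (1 / x) := by
          rw [arg1]
          have := hint 2 (-(1 / x))
          push_cast at this
          rw [this, hodd]
        rw [habs, harg1, hr]; ring
      · have arg2 : (1 - x) / x = 1 / x + -1 := by
          field_simp; ring
        have harg2 : h ((1 - x) / x) = h (1 / x) := by
          rw [arg2]
          have := hint (-1) (1 / x)
          push_cast at this
          exact this
        rw [habs, harg2, hr]
  · exact h0
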